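/- Let k ∈ ℕ, k ≥ 1, and set r = 1/(2·log(2k)). If (ℓ_n) is a sequence of natural numbers with ℓ_n → ∞, then the probability that a uniformly random word of length ℓ_n over an alphabet of size 2k contains every word of length at most ⌊r·log(ℓ_n)⌋ as a contiguous subword tends to 1 as n → ∞. -/

import Mathlib

open Filter

/-- A word `w` of length `L` appears as a contiguous subword of `v : Fin n → A`. -/
def WordAppears {A : Type} {n L : ℕ} (v : Fin n → A) (w : Fin L → A) : Prop :=
  ∃ i : ℕ, ∃ h : i + L ≤ n, ∀ j : Fin L, v ⟨i + j, by have := j.isLt; omega⟩ = w j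

lemma count_not_appears {A : Type} [Fintype A] {l m : ℕ} (hm : 0 < m) (w : Fin m → A) :
    Nat.card {v : Fin l → A // ¬ WordAppears v w} ≤
      (Fintype.card A ^ m - 1) ^ (l / m) * Fintype.card A ^ (l - (l / m) * m) := by
  classical
  set N := l / m with hN
  have hNm : N * m ≤ l := Nat.div_mul_le_self l m
  -- target type
  let T := (Fin N → {u : Fin m → A // u ≠ w}) × (Fin (l - N * m) → A)
  have hT : Nat.card T = (Fintype.card A ^ m - 1) ^ N * Fintype.card A ^ (l - N * m) := by
    simp only [T, Nat.card_eq_fintype_card, Fintype.card_prod, Fintype.card_fun]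
    have h1 : Fintype.card {u : Fin m → A // u ≠ w} = Fintype.card A ^ m - 1 := by
      have := Fintype.card_subtype_compl (fun u : Fin m → A => u = w)
      simpa [Fintype.card_subtype_eq] using this
    rw [h1, Fintype.card_fin, Fintype.card_fin]
  rw [← hT]
  refine Nat.card_le_card_of_injective (fun v => ?_) ?_
  · refine ⟨fun t => ⟨fun j => v.1 ⟨t.1 * m + j.1, by
        have h1 : t.1 * m + j.1 < (t.1 + 1) * m := by have := j.isLt; nlinarith [j.isLt]
        have h2 : (t.1 + 1) * m ≤ N * m := Nat.mul_le_mul_right m t.isLt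
        omega⟩, ?_⟩, fun s => v.1 ⟨N * m + s.1, by have := s.isLt; omega⟩⟩
    intro hblock
    apply v.2
    refine ⟨t.1 * m, by
        have h2 : (t.1 + 1) * m ≤ N * m := Nat.mul_le_mul_right m t.isLt
        rw [Nat.add_one_mul] at h2
        omega, fun j => ?_⟩
    have := congrFun hblock j
    simpa using this
  · rintro ⟨v, hv⟩ ⟨v', hv'⟩ h
    have h1 := congrArg Prod.fst h
    have h2 := congrArg Prod.snd h
    simp only at h1 h2
    ext i
    by_cases hi : i.1 < N * m
    · have ht : i.1 / m < N := by
        rw [Nat.div_lt_iff_lt_mul hm]; omega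
      have hj : i.1 % m < m := Nat.mod_lt _ hm
      have key := congrFun (congrArg Subtype.val (congrFun h1 ⟨i.1 / m, ht⟩)) ⟨i.1 % m, hj⟩
      have hidx : i.1 / m * m + i.1 % m = i.1 := Nat.div_add_mod' i.1 m
      rw [show i = (⟨i.1 / m * m + i.1 % m, by have := i.isLt; omega⟩ : Fin l) from Fin.ext hidx.symm]
      exact key
    · have hs : i.1 - N * m < l - N * m := by have := i.isLt; omega
      have key := congrFun h2 ⟨i.1 - N * m, hs⟩
      have hidx : N * m + (i.1 - N * m) = i.1 := by omega
      rw [show i = (⟨N * m + (i.1 - N * m), by have := i.isLt; omega⟩ : Fin l) from Fin.ext hidx.symm]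
      exact key

lemma bad_card_le {A : Type} [Fintype A] [Nonempty A] {l M : ℕ} (hM : 0 < M) :
    Set.ncard {v : Fin l → A | ¬ ∀ L : ℕ, L ≤ M → ∀ w : Fin L → A, WordAppears v w} ≤
      Fintype.card A ^ M *
        ((Fintype.card A ^ M - 1) ^ (l / M) * Fintype.card A ^ (l - (l / M) * M)) := by
  classical
  -- padding: bad implies some length-M word does not appear
  have hsub : {v : Fin l → A | ¬ ∀ L : ℕ, L ≤ M → ∀ w : Fin L → A, WordAppears v w} ⊆
      ⋃ w : Fin M → A, {v | ¬ WordAppears v w} := by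
    intro v hv
    simp only [Set.mem_setOf_eq] at hv
    push_neg at hv
    obtain ⟨L, hL, w, hw⟩ := hv
    refine Set.mem_iUnion.2 ⟨fun j => if h : (j : ℕ) < L then w ⟨j, h⟩ else Classical.arbitrary A, ?_⟩
    intro hap
    obtain ⟨i, hi, hmatch⟩ := hap
    apply hw
    refine ⟨i, by omega, fun j => ?_⟩
    have hjM : (j : ℕ) < M := lt_of_lt_of_le j.isLt hL
    have := hmatch ⟨j, hjM⟩
    simpa [j.isLt] using this
  calc Set.ncard {v : Fin l → A | ¬ ∀ L : ℕ, L ≤ M → ∀ w : Fin L → A, WordAppears v w}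
      ≤ Set.ncard (⋃ w : Fin M → A, {v : Fin l → A | ¬ WordAppears v w}) :=
        Set.ncard_le_ncard hsub (Set.toFinite _)
    _ ≤ ∑ w : Fin M → A, Set.ncard {v : Fin l → A | ¬ WordAppears v w} := by
        rw [Set.ncard_eq_toFinset_card']
        have : (⋃ w : Fin M → A, {v : Fin l → A | ¬ WordAppears v w}).toFinset ⊆
            Finset.univ.biUnion (fun w : Fin M → A => {v : Fin l → A | ¬ WordAppears v w}.toFinset) := by
          intro v hv
          rw [Set.mem_toFinset, Set.mem_iUnion] at hv
          obtain ⟨w, hw⟩ := hv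
          exact Finset.mem_biUnion.2 ⟨w, Finset.mem_univ _, Set.mem_toFinset.2 hw⟩
        refine (Finset.card_le_card this).trans (Finset.card_biUnion_le.trans ?_)
        refine Finset.sum_le_sum fun w _ => ?_
        rw [Set.ncard_eq_toFinset_card']
    _ ≤ ∑ _w : Fin M → A, (Fintype.card A ^ M - 1) ^ (l / M) * Fintype.card A ^ (l - (l / M) * M) := by
        refine Finset.sum_le_sum fun w _ => ?_
        rw [← Nat.card_coe_set_eq]
        exact count_not_appears hM w
    _ = Fintype.card A ^ M * _ := by
        rw [Finset.sum_const, Finset.card_univ, smul_eq_mul, Fintype.card_fun,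
          Fintype.card_fin]

lemma ratio_bound {A : Type} [Fintype A] {q l : ℕ} (hq2 : 2 ≤ q)
    (hcard : Fintype.card A = q) {c : ℝ} (hc : c = 1 / (2 * Real.log q))
    (hl : q ^ 2 ≤ l) :
    (Set.ncard {v : Fin l → A | ¬ ∀ L : ℕ, L ≤ ⌊c * Real.log l⌋₊ →
        ∀ w : Fin L → A, WordAppears v w} : ℝ) / (q : ℝ) ^ l ≤
      Real.sqrt l * Real.exp (1 - Real.sqrt l / (c * Real.log l)) := by
  have hA : Nonempty A := by
    rw [← Fintype.card_pos_iff, hcard]; omega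
  have hq1 : (1:ℝ) < (q:ℝ) := by exact_mod_cast hq2.trans_lt' one_lt_two
  have hlogq : 0 < Real.log q := Real.log_pos hq1
  have hcpos : 0 < c := by rw [hc]; positivity
  have hl4 : 4 ≤ l := le_trans (by nlinarith) hl
  have hl0 : (0:ℝ) < (l:ℝ) := by exact_mod_cast (by omega : 0 < l)
  have hlogl : Real.log (q^2 : ℕ) ≤ Real.log l := by
    apply Real.log_le_log (by positivity) (by exact_mod_cast hl)
  have hlogl2 : 2 * Real.log q ≤ Real.log l := by
    rwa [Nat.cast_pow, Real.log_pow, Nat.cast_ofNat] at hlogl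
  have hloglpos : 0 < Real.log l := lt_of_lt_of_le (by positivity) hlogl2
  set M := ⌊c * Real.log l⌋₊ with hMdef
  have hclog1 : 1 ≤ c * Real.log l := by
    rw [hc]; rw [div_mul_eq_mul_div, one_mul, le_div_iff₀ (by positivity), one_mul]
    exact hlogl2
  have hM1 : 1 ≤ M := Nat.le_floor (by exact_mod_cast hclog1)
  have hMle : (M : ℝ) ≤ c * Real.log l := Nat.floor_le (by positivity)
  set N := l / M with hNdef
  have hNM : N * M ≤ l := Nat.div_mul_le_self l M
  -- (1): q^M ≤ √l
  have hsqrt : Real.sqrt l = Real.exp (Real.log l / 2) := by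
    rw [show Real.sqrt (l:ℝ) = (l:ℝ) ^ (1/2 : ℝ) from Real.sqrt_eq_rpow _,
      Real.rpow_def_of_pos hl0]
    ring_nf
  have hqM : ((q:ℝ)) ^ M ≤ Real.sqrt l := by
    rw [hsqrt]
    calc (q:ℝ) ^ M = Real.exp (M * Real.log q) := by
          rw [← Real.log_pow, Real.exp_log (by positivity)]
      _ ≤ Real.exp (Real.log l / 2) := by
          apply Real.exp_le_exp.2
          calc (M:ℝ) * Real.log q ≤ (c * Real.log l) * Real.log q :=
                mul_le_mul_of_nonneg_right hMle hlogq.le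
            _ = Real.log l / 2 := by rw [hc]; field_simp
  have hqM1 : (1:ℝ) ≤ (q:ℝ) ^ M := one_le_pow₀ hq1.le
  -- (2): l/(c log l) - 1 ≤ N
  have hlNM : l < (N + 1) * M := by
    have h := Nat.div_add_mod' l M
    have h2 : l % M < M := Nat.mod_lt l (by omega)
    rw [← hNdef] at h
    rw [Nat.add_one_mul]
    omega
  have hNreal : (l:ℝ) / (c * Real.log l) - 1 ≤ (N:ℝ) := by
    have h1 : (l:ℝ) < ((N:ℝ) + 1) * M := by exact_mod_cast hlNM
    have h2 : ((N:ℝ) + 1) * (M:ℝ) ≤ ((N:ℝ) + 1) * (c * Real.log l) :=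
      mul_le_mul_of_nonneg_left hMle (by positivity)
    rw [sub_le_iff_le_add, div_le_iff₀ (by positivity)]
    nlinarith
  -- (3)+(4): bad/q^l ≤ q^M * (1 - (q^M)⁻¹)^N
  have hbad := bad_card_le (A := A) (l := l) (by omega : 0 < M)
  rw [hcard] at hbad
  have hql : (0:ℝ) < (q:ℝ) ^ l := by positivity
  have hcast : ((q ^ M * ((q ^ M - 1) ^ N * q ^ (l - N * M)) : ℕ) : ℝ) =
      (q:ℝ)^M * (((q:ℝ)^M - 1) ^ N * (q:ℝ) ^ (l - N * M)) := by
    have hge : 1 ≤ q ^ M := Nat.one_le_pow _ _ (by omega)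
    push_cast [hge]
    ring
  have hratio : (Set.ncard {v : Fin l → A | ¬ ∀ L : ℕ, L ≤ M →
        ∀ w : Fin L → A, WordAppears v w} : ℝ) / (q : ℝ) ^ l ≤
      (q:ℝ)^M * (1 - ((q:ℝ)^M)⁻¹) ^ N := by
    rw [div_le_iff₀ hql]
    calc (Set.ncard {v : Fin l → A | ¬ ∀ L : ℕ, L ≤ M →
          ∀ w : Fin L → A, WordAppears v w} : ℝ)
        ≤ (q:ℝ)^M * (((q:ℝ)^M - 1) ^ N * (q:ℝ) ^ (l - N * M)) := by
          rw [← hcast]; exact_mod_cast hbad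
      _ = (q:ℝ)^M * (1 - ((q:ℝ)^M)⁻¹) ^ N * (q:ℝ) ^ l := by
          have hqM0 : ((q:ℝ)^M) ≠ 0 := by positivity
          have h1 : ((q:ℝ)^M - 1) = (1 - ((q:ℝ)^M)⁻¹) * (q:ℝ)^M := by
            field_simp
          have h2 : (q:ℝ) ^ (N * M) * (q:ℝ) ^ (l - N * M) = (q:ℝ) ^ l := by
            rw [← pow_add]
            congr 1
            omega
          rw [h1, mul_pow, ← pow_mul, mul_comm M N,
            mul_assoc ((1 - ((q:ℝ)^M)⁻¹)^N), h2]
          ring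
  refine hratio.trans ?_
  set P := (q:ℝ) ^ M with hPdef
  have hP0 : (0:ℝ) < P := by positivity
  have hs0 : (0:ℝ) < Real.sqrt l := Real.sqrt_pos.2 hl0
  have hs1 : (1:ℝ) ≤ Real.sqrt l := Real.one_le_sqrt.2 (by exact_mod_cast (by omega : 1 ≤ l))
  have hs2 : Real.sqrt l * Real.sqrt l = l := Real.mul_self_sqrt hl0.le
  set d := c * Real.log l with hddef
  have hd0 : (0:ℝ) < d := by positivity
  have hkey : Real.sqrt l / d - 1 ≤ (N:ℝ) * P⁻¹ := by
    have hPinv : (Real.sqrt l)⁻¹ ≤ P⁻¹ := inv_anti₀ hP0 hqM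
    have hN0 : (0:ℝ) ≤ (N:ℝ) := Nat.cast_nonneg N
    calc Real.sqrt l / d - 1 ≤ (N:ℝ) * (Real.sqrt l)⁻¹ := by
          rw [← div_eq_mul_inv, le_div_iff₀ hs0]
          have hexpand : (Real.sqrt l / d - 1) * Real.sqrt l = (l:ℝ)/d - Real.sqrt l := by
            rw [sub_mul, div_mul_eq_mul_div, hs2, one_mul]
          rw [hexpand]
          linarith [hNreal, hs1]
      _ ≤ (N:ℝ) * P⁻¹ := mul_le_mul_of_nonneg_left hPinv hN0
  have h1 : (0:ℝ) ≤ 1 - P⁻¹ := by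
    have : P⁻¹ ≤ 1 := inv_le_one_of_one_le₀ hqM1
    linarith
  have hpow : (1 - P⁻¹) ^ N ≤ Real.exp (1 - Real.sqrt l / d) := by
    calc (1 - P⁻¹) ^ N ≤ Real.exp (-P⁻¹) ^ N := by
          apply pow_le_pow_left₀ h1
          have := Real.add_one_le_exp (-P⁻¹)
          linarith
      _ = Real.exp ((N:ℝ) * -P⁻¹) := (Real.exp_nat_mul _ N).symm
      _ ≤ Real.exp (1 - Real.sqrt l / d) := by
          apply Real.exp_le_exp.2
          have : -((N:ℝ) * P⁻¹) ≤ -(Real.sqrt l / d - 1) := neg_le_neg hkey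
          linarith
  exact mul_le_mul hqM hpow (pow_nonneg h1 N) (by positivity)

lemma tendsto_D {c : ℝ} (hc : 0 < c) :
    Tendsto (fun x : ℝ => Real.sqrt x * Real.exp (1 - Real.sqrt x / (c * Real.log x)))
      atTop (nhds 0) := by
  have hF : Tendsto (fun u : ℝ => Real.exp (u / 2 + (1 - Real.exp (u / 2) / (c * u))))
      atTop (nhds 0) := by
    apply Real.tendsto_exp_atBot.comp
    refine tendsto_atBot_mono' atTop ?_
      (tendsto_atBot_add_const_right atTop 1
        (tendsto_neg_atTop_atBot.comp (tendsto_id.atTop_div_const two_pos)))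
    · have h2 : Tendsto (fun u : ℝ => Real.exp (u / 2) / (u / 2) ^ 2) atTop atTop :=
        (Real.tendsto_exp_div_pow_atTop 2).comp (tendsto_id.atTop_div_const two_pos)
      filter_upwards [h2.eventually_ge_atTop (4 * c), eventually_gt_atTop (0:ℝ)] with u h4 hu
      have hsq : (0:ℝ) < (u / 2) ^ 2 := by positivity
      have h6 : c * u * u ≤ Real.exp (u / 2) := by
        rw [le_div_iff₀ hsq] at h4
        nlinarith
      have hcu : (0:ℝ) < c * u := by positivity
      have h5 : u ≤ Real.exp (u / 2) / (c * u) := by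
        rw [le_div_iff₀ hcu]; nlinarith
      show u / 2 + (1 - Real.exp (u / 2) / (c * u)) ≤ -(u / 2) + 1
      linarith
  have hcomp := hF.comp Real.tendsto_log_atTop
  apply hcomp.congr'
  filter_upwards [eventually_gt_atTop (1:ℝ)] with x hx
  have hx0 : (0:ℝ) < x := by linarith
  have hsq : Real.sqrt x = Real.exp (Real.log x / 2) := by
    rw [Real.sqrt_eq_rpow, Real.rpow_def_of_pos hx0]; ring_nf
  simp only [Function.comp]
  rw [Real.exp_add, hsq]

lemma compl_ratio {A : Type} [Fintype A] {q l : ℕ} (hq : Fintype.card A = q)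
    (hq0 : 0 < q) (P : (Fin l → A) → Prop) :
    (Set.ncard {v : Fin l → A | P v} : ℝ) / (q : ℝ) ^ l =
      1 - (Set.ncard {v : Fin l → A | ¬ P v} : ℝ) / (q : ℝ) ^ l := by
  classical
  have hsum : {v : Fin l → A | P v}.toFinset.card +
      {v : Fin l → A | ¬ P v}.toFinset.card = q ^ l := by
    rw [Set.toFinset_setOf, Set.toFinset_setOf,
      Finset.card_filter_add_card_filter_not, Finset.card_univ,
      Fintype.card_fun, Fintype.card_fin, hq]
  have hql : (0:ℝ) < (q:ℝ) ^ l := by positivity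
  rw [Set.ncard_eq_toFinset_card', Set.ncard_eq_toFinset_card',
    eq_sub_iff_add_eq, ← add_div, div_eq_one_iff_eq (ne_of_gt hql)]
  exact_mod_cast hsum

theorem stmt_1 (k : ℕ) (hk : 1 ≤ k) (A : Type) [Fintype A]
    (hA : Fintype.card A = 2 * k) (ℓ : ℕ → ℕ) (hℓ : Tendsto ℓ atTop atTop) :
    Tendsto (fun n : ℕ =>
        (Set.ncard {v : Fin (ℓ n) → A |
            ∀ L : ℕ, L ≤ ⌊(1 / (2 * Real.log (2 * k))) * Real.log (ℓ n)⌋₊ →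
              ∀ w : Fin L → A, WordAppears v w} : ℝ) / (2 * k : ℝ) ^ (ℓ n))
      atTop (nhds 1) := by
  have hq2 : 2 ≤ 2 * k := by omega
  have hcastq : ((2 * k : ℕ) : ℝ) = 2 * (k : ℝ) := by push_cast; ring
  set c : ℝ := 1 / (2 * Real.log (2 * (k:ℝ))) with hcdef
  have hc : c = 1 / (2 * Real.log ((2 * k : ℕ) : ℝ)) := by rw [hcdef, hcastq]
  have hq1 : (1:ℝ) < ((2 * k : ℕ) : ℝ) := by
    rw [hcastq]; exact_mod_cast (by omega : 1 < 2 * k)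
  have hlogq : 0 < Real.log ((2 * k : ℕ) : ℝ) := Real.log_pos hq1
  have hcpos : 0 < c := by rw [hc]; positivity
  -- limit of the bad ratio
  have hbadlim : Tendsto (fun n : ℕ =>
      (Set.ncard {v : Fin (ℓ n) → A |
          ¬ ∀ L : ℕ, L ≤ ⌊c * Real.log (ℓ n)⌋₊ →
            ∀ w : Fin L → A, WordAppears v w} : ℝ) / ((2 * k : ℕ) : ℝ) ^ (ℓ n))
      atTop (nhds 0) := by
    have hD : Tendsto (fun n : ℕ => Real.sqrt (ℓ n) *
        Real.exp (1 - Real.sqrt (ℓ n) / (c * Real.log (ℓ n)))) atTop (nhds 0) :=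
      (tendsto_D hcpos).comp (tendsto_natCast_atTop_atTop.comp hℓ)
    apply squeeze_zero' (Filter.Eventually.of_forall fun n => by positivity) ?_ hD
    filter_upwards [hℓ.eventually (eventually_ge_atTop ((2 * k) ^ 2))] with n hn
    exact ratio_bound hq2 hA hc hn
  have hmain : Tendsto (fun n : ℕ => 1 -
      (Set.ncard {v : Fin (ℓ n) → A |
          ¬ ∀ L : ℕ, L ≤ ⌊c * Real.log (ℓ n)⌋₊ →
            ∀ w : Fin L → A, WordAppears v w} : ℝ) / ((2 * k : ℕ) : ℝ) ^ (ℓ n))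
      atTop (nhds 1) := by
    have h1 : Tendsto (fun _ : ℕ => (1:ℝ)) atTop (nhds 1) := tendsto_const_nhds
    simpa using h1.sub hbadlim
  apply hmain.congr
  intro n
  rw [← compl_ratio hA (by omega) _, hcastq]
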